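/- For 0 < c₁ < c₂, η = (c₁+c₂)/2, F(η) = √((η−μ)²+σ²), the quadratic g(d) = λ₀ + λ₁d + λ₂d² with λ₀ = ((η² + (η−μ)² + σ²)/(2F(η))) + (c₁−c₂)/2, λ₁ = −η/F(η), λ₂ = 1/(2F(η)) is tangent to −d+c₁ at d = η−F(η) and tangent to d−c₂ at d = η+F(η), and satisfies g(d) ≥ max{−d+c₁, 0, d−c₂} for all d ∈ ℝ whenever (1/4)(2μ−3c₁+c₂)(3c₂−c₁−2μ) ≤ σ². -/

import Mathlib

open Real

/-- The dual quadratic g is tangent to −d+c₁ at η−F(η) and to d−c₂ at η+F(η),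
and dominates max{−d+c₁, 0, d−c₂} everywhere under the variance condition. -/
theorem dual_quadratic_tangency (μ σ c₁ c₂ : ℝ) (hσ : 0 < σ)
    (hc₁ : 0 < c₁) (hc : c₁ < c₂) :
    let η := (c₁ + c₂)/2
    let Fη := Real.sqrt ((η - μ) ^ 2 + σ ^ 2)
    let lam₀ := (η ^ 2 + (η - μ) ^ 2 + σ ^ 2) / (2 * Fη) + (c₁ - c₂)/2
    let lam₁ := -η / Fη
    let lam₂ := 1 / (2 * Fη)
    let g := fun d : ℝ => lam₀ + lam₁ * d + lam₂ * d ^ 2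
    (g (η - Fη) = -(η - Fη) + c₁ ∧ HasDerivAt g (-1) (η - Fη)) ∧
    (g (η + Fη) = (η + Fη) - c₂ ∧ HasDerivAt g 1 (η + Fη)) ∧
    ((1/4) * (2*μ - 3*c₁ + c₂) * (3*c₂ - c₁ - 2*μ) ≤ σ ^ 2 →
      ∀ d : ℝ, max (max (-d + c₁) 0) (d - c₂) ≤ g d) := by
  intro η Fη lam₀ lam₁ lam₂ g
  have hη : η = (c₁ + c₂)/2 := rfl
  have hFpos : 0 < Fη := Real.sqrt_pos.mpr (by positivity)
  have hF2 : Fη ^ 2 = (η - μ) ^ 2 + σ ^ 2 := Real.sq_sqrt (by positivity)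
  have hFne : Fη ≠ 0 := ne_of_gt hFpos
  have hg : ∀ d : ℝ, g d = ((d - η) ^ 2 + Fη ^ 2) / (2 * Fη) - (c₂ - c₁) / 2 := by
    intro d
    simp only [g, lam₀, lam₁, lam₂]
    rw [hF2]
    field_simp
    ring
  have hderiv : ∀ d : ℝ, HasDerivAt g (lam₁ + 2 * lam₂ * d) d := by
    intro d
    have h := ((hasDerivAt_const d lam₀).add
        ((hasDerivAt_id d).const_mul lam₁)).add
        (((hasDerivAt_pow 2 d)).const_mul lam₂)
    simpa [g, mul_comm, mul_assoc, mul_left_comm, Pi.add_def] using h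
  refine ⟨⟨?_, ?_⟩, ⟨?_, ?_⟩, ?_⟩
  · rw [hg, hη]; field_simp; ring
  · have h := hderiv (η - Fη)
    have : lam₁ + 2 * lam₂ * (η - Fη) = -1 := by
      simp only [lam₁, lam₂]; field_simp; ring
    rwa [this] at h
  · rw [hg, hη]; field_simp; ring
  · have h := hderiv (η + Fη)
    have : lam₁ + 2 * lam₂ * (η + Fη) = 1 := by
      simp only [lam₁, lam₂]; field_simp; ring
    rwa [this] at h
  · intro hcond d
    rw [hη] at hF2
    have hΔ : c₂ - c₁ ≤ Fη := by
      nlinarith [hF2, hcond, hFpos, hc, sq_nonneg (Fη - (c₂ - c₁)), sq_nonneg (Fη + (c₂ - c₁))]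
    refine max_le (max_le ?_ ?_) ?_
    · rw [hg, hη, div_sub_div _ _ (by positivity : (2:ℝ) * Fη ≠ 0) two_ne_zero,
        le_div_iff₀ (by positivity)]
      nlinarith [sq_nonneg (d - (c₁ + c₂)/2 + Fη)]
    · rw [hg, hη, div_sub_div _ _ (by positivity : (2:ℝ) * Fη ≠ 0) two_ne_zero,
        le_div_iff₀ (by positivity)]
      nlinarith [sq_nonneg (d - (c₁ + c₂)/2), mul_le_mul_of_nonneg_left hΔ hFpos.le]
    · rw [hg, hη, div_sub_div _ _ (by positivity : (2:ℝ) * Fη ≠ 0) two_ne_zero,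
        le_div_iff₀ (by positivity)]
      nlinarith [sq_nonneg (d - (c₁ + c₂)/2 - Fη)]
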